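/- For all positive integers m, n, r, the number of m×n matrices with entries in {0,1} having exactly r entries equal to 1, no zero row, and no zero column equals Σ_{l=r}^{m·n} Σ_{d ∣ l} (−1)^{n+m−(d+l/d)} · C(m, d) · C(n, l/d) · C(l, r), an identity of integers, where C(a, b) denotes the binomial coefficient (terms with d > m or l/d > n vanish, so the sum over l ≥ r has finite support and may be truncated at l = m·n). -/
import Mathlib

open Finset

namespace CardZeroOneAux

variable {m n : ℕ}

def supp (M : Fin m → Fin n → Bool) : Finset (Fin m × Fin n) :=
  univ.filter fun p => M p.1 p.2 = true

lemma count1 (r : ℕ) (A : Finset (Fin m)) (B : Finset (Fin n)) :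
    (univ.filter fun M : Fin m → Fin n → Bool =>
      (supp M).card = r ∧ supp M ⊆ A ×ˢ B).card = (A.card * B.card).choose r := by
  rw [← card_product, ← card_powersetCard]
  apply card_bij' (fun M _ => supp M) (fun s _ => fun a b => decide ((a, b) ∈ s))
  · intro M hM
    simp only [mem_filter] at hM
    exact mem_powersetCard.2 ⟨hM.2.2, hM.2.1⟩
  · intro s hs
    rw [mem_powersetCard] at hs
    have hsupp : supp (fun a b => decide ((a, b) ∈ s)) = s := by
      ext p; simp [supp]
    simp only [mem_filter, mem_univ, true_and, hsupp]
    exact ⟨hs.2, hs.1⟩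
  · intro M hM
    funext a b
    simp [supp]
  · intro s hs
    ext p
    simp [supp]

lemma ie (k : ℕ) (R : Finset (Fin k)) :
    ∑ A ∈ (univ : Finset (Fin k)).powerset,
      (if R ⊆ A then (-1 : ℤ) ^ (k - A.card) else 0) = if R = univ then 1 else 0 := by
  have h1 : ∑ A ∈ (univ : Finset (Fin k)).powerset,
      (if R ⊆ A then (-1 : ℤ) ^ (k - A.card) else 0)
      = ∑ C ∈ Rᶜ.powerset, (-1 : ℤ) ^ C.card := by
    rw [sum_ite, sum_const_zero, add_zero]
    apply sum_nbij' (i := fun A => Aᶜ) (j := fun C => Cᶜ)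
    · intro A hA
      simp only [mem_filter, mem_powerset] at hA
      exact mem_powerset.2 (compl_subset_compl.2 hA.2)
    · intro C hC
      simp only [mem_filter, mem_powerset]
      refine ⟨subset_univ _, ?_⟩
      have := mem_powerset.1 hC
      intro x hx
      simp only [mem_compl]
      intro hxC
      exact absurd hx (by simpa using this hxC)
    · intro A _; exact compl_compl A
    · intro C _; exact compl_compl C
    · intro A hA
      rw [card_compl, Fintype.card_fin]
  rw [h1, sum_powerset_neg_one_pow_card]
  congr 1
  simp [Finset.compl_eq_empty_iff]

lemma supp_subset_product_iff (M : Fin m → Fin n → Bool) (A : Finset (Fin m))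
    (B : Finset (Fin n)) :
    supp M ⊆ A ×ˢ B ↔ (supp M).image Prod.fst ⊆ A ∧ (supp M).image Prod.snd ⊆ B := by
  constructor
  · intro h
    exact ⟨image_subset_iff.2 fun p hp => (mem_product.1 (h hp)).1,
      image_subset_iff.2 fun p hp => (mem_product.1 (h hp)).2⟩
  · rintro ⟨h1, h2⟩ p hp
    exact mem_product.2 ⟨h1 (mem_image_of_mem _ hp), h2 (mem_image_of_mem _ hp)⟩

lemma rows_eq (M : Fin m → Fin n → Bool) :
    (supp M).image Prod.fst = univ ↔ ∀ i, ∃ j, M i j = true := by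
  simp [eq_univ_iff_forall, Finset.mem_image, supp, Prod.exists]

lemma cols_eq (M : Fin m → Fin n → Bool) :
    (supp M).image Prod.snd = univ ↔ ∀ j, ∃ i, M i j = true := by
  simp [eq_univ_iff_forall, Finset.mem_image, supp, Prod.exists]

end CardZeroOneAux

namespace CardZeroOneAux

lemma stepB (m n r : ℕ) :
    ((univ.filter fun M : Fin m → Fin n → Bool =>
        (supp M).card = r ∧ (∀ i, ∃ j, M i j = true) ∧ (∀ j, ∃ i, M i j = true)).card : ℤ)
    = ∑ A ∈ (univ : Finset (Fin m)).powerset, ∑ B ∈ (univ : Finset (Fin n)).powerset,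
        (-1 : ℤ) ^ ((m - A.card) + (n - B.card)) * ((A.card * B.card).choose r : ℤ) := by
  symm
  calc
    ∑ A ∈ (univ : Finset (Fin m)).powerset, ∑ B ∈ (univ : Finset (Fin n)).powerset,
        (-1 : ℤ) ^ ((m - A.card) + (n - B.card)) * ((A.card * B.card).choose r : ℤ)
      = ∑ A ∈ (univ : Finset (Fin m)).powerset, ∑ B ∈ (univ : Finset (Fin n)).powerset,
          ∑ M ∈ univ.filter (fun M : Fin m → Fin n → Bool => (supp M).card = r),
            (if (supp M).image Prod.fst ⊆ A then (-1 : ℤ) ^ (m - A.card) else 0) *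
            (if (supp M).image Prod.snd ⊆ B then (-1 : ℤ) ^ (n - B.card) else 0) := by
        refine sum_congr rfl fun A _ => sum_congr rfl fun B _ => ?_
        have hM : ∀ M : Fin m → Fin n → Bool,
            (if (supp M).image Prod.fst ⊆ A then (-1 : ℤ) ^ (m - A.card) else 0) *
            (if (supp M).image Prod.snd ⊆ B then (-1 : ℤ) ^ (n - B.card) else 0)
            = if supp M ⊆ A ×ˢ B then (-1 : ℤ) ^ (m - A.card) * (-1) ^ (n - B.card) else 0 := by
          intro M
          by_cases h1 : (supp M).image Prod.fst ⊆ A <;>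
            by_cases h2 : (supp M).image Prod.snd ⊆ B <;>
            simp [h1, h2, supp_subset_product_iff]
        simp_rw [hM]
        rw [← sum_filter, filter_filter, sum_const, count1, nsmul_eq_mul, pow_add]
        ring
    _ = ∑ A ∈ (univ : Finset (Fin m)).powerset,
          ∑ M ∈ univ.filter (fun M : Fin m → Fin n → Bool => (supp M).card = r),
          ∑ B ∈ (univ : Finset (Fin n)).powerset,
            (if (supp M).image Prod.fst ⊆ A then (-1 : ℤ) ^ (m - A.card) else 0) *
            (if (supp M).image Prod.snd ⊆ B then (-1 : ℤ) ^ (n - B.card) else 0) :=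
        sum_congr rfl fun A _ => sum_comm
    _ = ∑ M ∈ univ.filter (fun M : Fin m → Fin n → Bool => (supp M).card = r),
          ∑ A ∈ (univ : Finset (Fin m)).powerset,
          ∑ B ∈ (univ : Finset (Fin n)).powerset,
            (if (supp M).image Prod.fst ⊆ A then (-1 : ℤ) ^ (m - A.card) else 0) *
            (if (supp M).image Prod.snd ⊆ B then (-1 : ℤ) ^ (n - B.card) else 0) := sum_comm
    _ = ∑ M ∈ univ.filter (fun M : Fin m → Fin n → Bool => (supp M).card = r),
          (∑ A ∈ (univ : Finset (Fin m)).powerset,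
            if (supp M).image Prod.fst ⊆ A then (-1 : ℤ) ^ (m - A.card) else 0) *
          (∑ B ∈ (univ : Finset (Fin n)).powerset,
            if (supp M).image Prod.snd ⊆ B then (-1 : ℤ) ^ (n - B.card) else 0) :=
        sum_congr rfl fun M _ => (sum_mul_sum _ _ _ _).symm
    _ = ∑ M ∈ univ.filter (fun M : Fin m → Fin n → Bool => (supp M).card = r),
          (if (∀ i, ∃ j, M i j = true) ∧ (∀ j, ∃ i, M i j = true) then (1 : ℤ) else 0) := by
        refine sum_congr rfl fun M _ => ?_
        rw [ie, ie]
        by_cases h1 : (∀ i, ∃ j, M i j = true) <;> by_cases h2 : (∀ j, ∃ i, M i j = true) <;>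
          simp [h1, h2, rows_eq, cols_eq]
    _ = (((univ.filter fun M : Fin m → Fin n → Bool => (supp M).card = r).filter
          (fun M => (∀ i, ∃ j, M i j = true) ∧ (∀ j, ∃ i, M i j = true))).card : ℤ) := by
        rw [sum_boole]
    _ = ((univ.filter fun M : Fin m → Fin n → Bool =>
          (supp M).card = r ∧ (∀ i, ∃ j, M i j = true) ∧ (∀ j, ∃ i, M i j = true)).card : ℤ) := by
        rw [filter_filter]

end CardZeroOneAux

namespace CardZeroOneAux

lemma choose_ne_zero_le {a b : ℕ} (h : (a.choose b : ℤ) ≠ 0) : b ≤ a := by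
  by_contra hb
  exact h (by rw [Nat.choose_eq_zero_of_lt (Nat.lt_of_not_le hb)]; simp)

lemma stepD (m n r : ℕ) (hr : 0 < r) :
    ∑ i ∈ Finset.range (m + 1), ∑ j ∈ Finset.range (n + 1),
        (m.choose i : ℤ) *
          ((n.choose j : ℤ) * ((-1 : ℤ) ^ ((m - i) + (n - j)) * ((i * j).choose r : ℤ)))
    = ∑ l ∈ Finset.Icc r (m * n), ∑ d ∈ l.divisors,
        (-1 : ℤ) ^ (n + m - (d + l / d)) * (m.choose d : ℤ) * (n.choose (l / d) : ℤ) *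
          (l.choose r : ℤ) := by
  have hL := Finset.sum_product' (s := Finset.range (m + 1)) (t := Finset.range (n + 1))
    (f := fun i j => (m.choose i : ℤ) *
      ((n.choose j : ℤ) * ((-1 : ℤ) ^ ((m - i) + (n - j)) * ((i * j).choose r : ℤ))))
  have hR := Finset.sum_sigma' (s := Finset.Icc r (m * n)) (t := fun l => l.divisors)
    (f := fun l d => (-1 : ℤ) ^ (n + m - (d + l / d)) * (m.choose d : ℤ) *
      (n.choose (l / d) : ℤ) * (l.choose r : ℤ))
  rw [← hL, hR]
  symm
  refine Finset.sum_bij_ne_zero (fun a _ _ => (a.2, a.1 / a.2)) ?_ ?_ ?_ ?_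
  · rintro ⟨l, d⟩ h₁ h₂
    simp only [mul_ne_zero_iff] at h₂
    have hd : d ≤ m := choose_ne_zero_le h₂.1.1.2
    have he : l / d ≤ n := choose_ne_zero_le h₂.1.2
    simp only [mem_product, mem_range]
    exact ⟨Nat.lt_succ_of_le hd, Nat.lt_succ_of_le he⟩
  · rintro ⟨l₁, d₁⟩ h₁₁ h₁₂ ⟨l₂, d₂⟩ h₂₁ h₂₂ heq
    simp only [mem_sigma, Nat.mem_divisors] at h₁₁ h₂₁
    simp only [Prod.mk.injEq] at heq
    obtain ⟨hd, hq⟩ := heq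
    have hl : l₁ = l₂ := by
      have e1 : d₁ * (l₁ / d₁) = l₁ := Nat.mul_div_cancel' h₁₁.2.1
      have e2 : d₂ * (l₂ / d₂) = l₂ := Nat.mul_div_cancel' h₂₁.2.1
      rw [← e1, ← e2, hq, hd]
    subst hl; subst hd; rfl
  · rintro ⟨i, j⟩ hb hb0
    simp only [mul_ne_zero_iff] at hb0
    have hij : r ≤ i * j := choose_ne_zero_le hb0.2.2.2
    simp only [mem_product, mem_range, Nat.lt_succ_iff] at hb
    have hi0 : 0 < i := by
      rcases Nat.eq_zero_or_pos i with h | h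
      · subst h; simp at hij; omega
      · exact h
    have hdiv : (i * j) / i = j := Nat.mul_div_cancel_left j hi0
    refine ⟨⟨i * j, i⟩, ?_, ?_, ?_⟩
    · simp only [mem_sigma, Finset.mem_Icc, Nat.mem_divisors]
      exact ⟨⟨hij, Nat.mul_le_mul hb.1 hb.2⟩, dvd_mul_right i j,
        (Nat.lt_of_lt_of_le hr hij).ne'⟩
    · have hsign : n + m - (i + (i * j) / i) = (m - i) + (n - j) := by
        rw [hdiv]; omega
      simp only [hdiv, hsign]
      exact mul_ne_zero (mul_ne_zero (mul_ne_zero (pow_ne_zero _ (by norm_num)) hb0.1)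
        hb0.2.1) hb0.2.2.2
    · simp [hdiv]
  · rintro ⟨l, d⟩ h₁ h₂
    simp only [mem_sigma, Finset.mem_Icc, Nat.mem_divisors] at h₁
    simp only [mul_ne_zero_iff] at h₂
    have hd : d ≤ m := choose_ne_zero_le h₂.1.1.2
    have he : l / d ≤ n := choose_ne_zero_le h₂.1.2
    have hdl : d * (l / d) = l := Nat.mul_div_cancel' h₁.2.1
    have hsign : n + m - (d + l / d) = (m - d) + (n - (l / d)) := by omega
    simp only [hdl, hsign]
    ring

end CardZeroOneAux

open CardZeroOneAux

/-- The number of `m×n` `(0,1)`-matrices with exactly `r` ones, no zero row and no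
zero column, equals
`∑_{l=r}^{mn} ∑_{d ∣ l} (−1)^{n+m−(d+l/d)} C(m,d) C(n,l/d) C(l,r)`
(terms with `d > m` or `l/d > n` vanish, so the sum over `l ≥ r` is truncated at
`l = m·n`). -/
theorem card_zeroOne_matrices (m n r : ℕ) (hm : 0 < m) (hn : 0 < n) (hr : 0 < r) :
    (Nat.card {M : Fin m → Fin n → Bool //
        (Finset.univ.filter fun p : Fin m × Fin n => M p.1 p.2 = true).card = r ∧
        (∀ i, ∃ j, M i j = true) ∧ (∀ j, ∃ i, M i j = true)} : ℤ) =
      ∑ l ∈ Finset.Icc r (m * n), ∑ d ∈ l.divisors,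
        (-1 : ℤ) ^ (n + m - (d + l / d)) * (m.choose d : ℤ) * (n.choose (l / d) : ℤ) *
          (l.choose r : ℤ) := by
  have hA : Nat.card {M : Fin m → Fin n → Bool //
        (Finset.univ.filter fun p : Fin m × Fin n => M p.1 p.2 = true).card = r ∧
        (∀ i, ∃ j, M i j = true) ∧ (∀ j, ∃ i, M i j = true)}
      = (univ.filter fun M : Fin m → Fin n → Bool =>
          (supp M).card = r ∧ (∀ i, ∃ j, M i j = true) ∧ (∀ j, ∃ i, M i j = true)).card := by
    rw [Nat.card_eq_fintype_card, Fintype.card_subtype]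
    rfl
  rw [hA, stepB, ← stepD m n r hr]
  rw [Finset.sum_powerset_apply_card
    (f := fun i => ∑ B ∈ (univ : Finset (Fin n)).powerset,
      (-1 : ℤ) ^ ((m - i) + (n - B.card)) * ((i * B.card).choose r : ℤ))]
  simp only [card_univ, Fintype.card_fin, nsmul_eq_mul]
  refine sum_congr rfl fun i _ => ?_
  rw [Finset.sum_powerset_apply_card
    (f := fun j => (-1 : ℤ) ^ ((m - i) + (n - j)) * ((i * j).choose r : ℤ))]
  simp only [card_univ, Fintype.card_fin, nsmul_eq_mul, mul_sum]
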